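/- Let S be a finite set with m = |S|, let N ≥ 0 be an integer, and let σ ∈ D(S, N). Then the subspace of Conf(S) consisting of all configurations p satisfying conditions (C1) and (C2) is a contractible topological space. -/

import Mathlib

/-- The configuration space `Conf S`: the set of injective maps (configurations)
`p : S → ℝ × ℝ`, as a subset of the product space `S → ℝ × ℝ`. -/
def Conf (S : Type*) : Set (S → ℝ × ℝ) := {p | Function.Injective p}

/-- Condition (I) on a surjection `σ`: consecutive values are distinct. -/
def CondI {S : Type*} {k : ℕ} (σ : Fin k → S) : Prop :=
  ∀ i j : Fin k, (j : ℕ) = (i : ℕ) + 1 → σ i ≠ σ j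

/-- Condition (II): no interleaving pattern `i₁ < j₁ < i₂ < j₂` with
`i₁, i₂ ∈ σ⁻¹(s)` and `j₁, j₂ ∈ σ⁻¹(s')` for `s ≠ s'`. -/
def CondII {S : Type*} {k : ℕ} (σ : Fin k → S) : Prop :=
  ¬ ∃ (s s' : S) (i₁ j₁ i₂ j₂ : Fin k),
      s ≠ s' ∧ i₁ < j₁ ∧ j₁ < i₂ ∧ i₂ < j₂ ∧
      σ i₁ = s ∧ σ i₂ = s ∧ σ j₁ = s' ∧ σ j₂ = s'

/-- `σ ∈ D(S, N)`: a surjection `σ : {1, …, N + |S|} → S` satisfying (I) and (II).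
(The condition `k = N + |S|` is imposed as a separate hypothesis in the theorems.) -/
def MemD {S : Type*} {k : ℕ} (σ : Fin k → S) : Prop :=
  Function.Surjective σ ∧ CondI σ ∧ CondII σ

/-- Condition (C1) on a configuration `p`: if some element of `σ⁻¹(s)` lies strictly
between two elements of `σ⁻¹(s')` (for `s ≠ s'`) then `x_s < x_{s'}`. -/
def CondC1 {S : Type*} {k : ℕ} (σ : Fin k → S) (p : S → ℝ × ℝ) : Prop :=
  ∀ s s' : S, s ≠ s' →
    (∃ i j₁ j₂ : Fin k, σ i = s ∧ σ j₁ = s' ∧ σ j₂ = s' ∧ j₁ < i ∧ i < j₂) →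
    (p s).1 < (p s').1

/-- Condition (C2) on a configuration `p`: if `x_s = x_{s'}` (for `s ≠ s'`) and every
element of `σ⁻¹(s)` is smaller than every element of `σ⁻¹(s')` then `y_s < y_{s'}`. -/
def CondC2 {S : Type*} {k : ℕ} (σ : Fin k → S) (p : S → ℝ × ℝ) : Prop :=
  ∀ s s' : S, s ≠ s' → (p s).1 = (p s').1 →
    (∀ i j : Fin k, σ i = s → σ j = s' → i < j) →
    (p s).2 < (p s').2


namespace StAux

open Finset

variable {S : Type*} {k : ℕ}

open Classical in
/-- occurrences of `s` -/
noncomputable def occ (σ : Fin k → S) (s : S) : Finset (Fin k) :=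
  Finset.univ.filter (fun i => σ i = s)

open Classical in
lemma mem_occ {σ : Fin k → S} {s : S} {i : Fin k} : i ∈ occ σ s ↔ σ i = s := by
  simp [occ]

lemma occ_nonempty {σ : Fin k → S} (h : Function.Surjective σ) (s : S) :
    (occ σ s).Nonempty := by
  obtain ⟨i, hi⟩ := h s
  exact ⟨i, mem_occ.2 hi⟩

noncomputable def fstO (σ : Fin k → S) (h : Function.Surjective σ) (s : S) : Fin k :=
  (occ σ s).min' (occ_nonempty h s)

noncomputable def lstO (σ : Fin k → S) (h : Function.Surjective σ) (s : S) : Fin k :=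
  (occ σ s).max' (occ_nonempty h s)

lemma fstO_spec {σ : Fin k → S} (h : Function.Surjective σ) (s : S) :
    σ (fstO σ h s) = s := mem_occ.1 ((occ σ s).min'_mem _)

lemma lstO_spec {σ : Fin k → S} (h : Function.Surjective σ) (s : S) :
    σ (lstO σ h s) = s := mem_occ.1 ((occ σ s).max'_mem _)

lemma fstO_le {σ : Fin k → S} (h : Function.Surjective σ) {s : S} {i : Fin k}
    (hi : σ i = s) : fstO σ h s ≤ i := Finset.min'_le _ _ (mem_occ.2 hi)

lemma le_lstO {σ : Fin k → S} (h : Function.Surjective σ) {s : S} {i : Fin k}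
    (hi : σ i = s) : i ≤ lstO σ h s := Finset.le_max' _ _ (mem_occ.2 hi)

/-- `s` is nested inside `s'` -/
def Rrel (σ : Fin k → S) (s s' : S) : Prop :=
  s ≠ s' ∧ ∃ i j₁ j₂ : Fin k,
    σ i = s ∧ σ j₁ = s' ∧ σ j₂ = s' ∧ j₁ < i ∧ i < j₂

/-- all occurrences of `s` before all occurrences of `s'` -/
def AB (σ : Fin k → S) (s s' : S) : Prop :=
  ∀ i j : Fin k, σ i = s → σ j = s' → i < j

lemma Rrel_norm {σ : Fin k → S} (h : Function.Surjective σ) {s s' : S}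
    (hR : Rrel σ s s') :
    ∃ i : Fin k, σ i = s ∧ fstO σ h s' < i ∧ i < lstO σ h s' := by
  obtain ⟨hne, i, j₁, j₂, hi, hj₁, hj₂, h1, h2⟩ := hR
  exact ⟨i, hi, lt_of_le_of_lt (fstO_le h hj₁) h1, lt_of_lt_of_le h2 (le_lstO h hj₂)⟩

lemma fstO_ne {σ : Fin k → S} (h : Function.Surjective σ) {s s' : S} (hne : s ≠ s') :
    fstO σ h s ≠ fstO σ h s' := by
  intro heq
  apply hne
  rw [← fstO_spec h s, ← fstO_spec h s', heq]

lemma trichotomy {σ : Fin k → S} (h : Function.Surjective σ) {s s' : S} (hne : s ≠ s') :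
    Rrel σ s s' ∨ Rrel σ s' s ∨ AB σ s s' ∨ AB σ s' s := by
  by_cases h1 : AB σ s s'
  · exact Or.inr (Or.inr (Or.inl h1))
  by_cases h2 : AB σ s' s
  · exact Or.inr (Or.inr (Or.inr h2))
  -- from ¬ h1 : some occurrence of s' before some occurrence of s
  unfold AB at h1 h2
  push_neg at h1 h2
  obtain ⟨i1, j1, hi1, hj1, hle1⟩ := h1
  obtain ⟨i2, j2, hi2, hj2, hle2⟩ := h2
  -- j1 < i1 with σ j1 = s', σ i1 = s
  have hj1i1 : j1 < i1 := lt_of_le_of_ne hle1 (fun heq => hne (hi1.symm.trans (heq ▸ hj1)))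
  have hj2i2 : j2 < i2 := lt_of_le_of_ne hle2 (fun heq => hne (hj2.symm.trans (heq ▸ hi2)))
  -- fstO s' < lstO s  and  fstO s < lstO s'
  have hA : fstO σ h s' < lstO σ h s :=
    lt_of_le_of_lt (fstO_le h hj1) (lt_of_lt_of_le hj1i1 (le_lstO h hi1))
  have hB : fstO σ h s < lstO σ h s' :=
    lt_of_le_of_lt (fstO_le h hj2) (lt_of_lt_of_le hj2i2 (le_lstO h hi2))
  rcases lt_or_gt_of_ne (fstO_ne h hne) with hf | hf
  · -- fstO s < fstO s' : fstO s' strictly between fstO s and lstO s : Rrel s' s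
    exact Or.inr (Or.inl ⟨hne.symm, fstO σ h s', fstO σ h s, lstO σ h s,
      fstO_spec h s', fstO_spec h s, lstO_spec h s, hf, hA⟩)
  · exact Or.inl ⟨hne, fstO σ h s, fstO σ h s', lstO σ h s',
      fstO_spec h s, fstO_spec h s', lstO_spec h s', hf, hB⟩

lemma asym {σ : Fin k → S} (h : Function.Surjective σ) (hII : CondII σ) {s s' : S}
    (hR : Rrel σ s s') (hR' : Rrel σ s' s) : False := by
  have hne := hR.1
  obtain ⟨i, hi, hi1, hi2⟩ := Rrel_norm h hR
  obtain ⟨i', hi', hi'1, hi'2⟩ := Rrel_norm h hR'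
  rcases lt_or_gt_of_ne (fstO_ne h hne) with hf | hf
  · exact hII ⟨s, s', fstO σ h s, fstO σ h s', i, lstO σ h s',
      hne, hf, hi1, hi2, fstO_spec h s, hi, fstO_spec h s', lstO_spec h s'⟩
  · exact hII ⟨s', s, fstO σ h s', fstO σ h s, i', lstO σ h s,
      hne.symm, hf, hi'1, hi'2, fstO_spec h s', hi', fstO_spec h s, lstO_spec h s⟩

lemma lstO_ne {σ : Fin k → S} (h : Function.Surjective σ) {s s' : S} (hne : s ≠ s') :
    lstO σ h s ≠ lstO σ h s' := by
  intro heq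
  apply hne
  rw [← lstO_spec h s, ← lstO_spec h s', heq]

lemma Rrel_trans {σ : Fin k → S} (h : Function.Surjective σ) (hII : CondII σ)
    {s s' s'' : S} (hR : Rrel σ s s') (hR' : Rrel σ s' s'') : Rrel σ s s'' := by
  by_cases hss'' : s = s''
  · subst hss''
    exact absurd hR' (fun h' => asym h hII hR h')
  obtain ⟨i, hi, hi1, hi2⟩ := Rrel_norm h hR
  obtain ⟨i', hi', hi'1, hi'2⟩ := Rrel_norm h hR'
  have hne' : s' ≠ s'' := hR'.1
  have claim1 : fstO σ h s'' < fstO σ h s' := by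
    rcases lt_or_gt_of_ne (fstO_ne h hne') with hf | hf
    · exact absurd ⟨s', s'', fstO σ h s', fstO σ h s'', i', lstO σ h s'',
        hne', hf, hi'1, hi'2, fstO_spec h s', hi', fstO_spec h s'', lstO_spec h s''⟩ hII
    · exact hf
  have claim2 : lstO σ h s' < lstO σ h s'' := by
    rcases lt_or_gt_of_ne (lstO_ne h hne') with hf | hf
    · exact hf
    · exact absurd ⟨s'', s', fstO σ h s'', i', lstO σ h s'', lstO σ h s',
        hne'.symm, hi'1, hi'2, hf, fstO_spec h s'', lstO_spec h s'', hi', lstO_spec h s'⟩ hII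
  exact ⟨hss'', i, fstO σ h s'', lstO σ h s'', hi, fstO_spec h s'', lstO_spec h s'',
    lt_trans claim1 hi1, lt_trans hi2 claim2⟩

section Geometry

variable [Fintype S]

open Classical in
/-- nesting depth -/
noncomputable def dep (σ : Fin k → S) (s : S) : ℕ :=
  (Finset.univ.filter (fun t => Rrel σ s t)).card

open Classical in
lemma dep_lt {σ : Fin k → S} (h : Function.Surjective σ) (hII : CondII σ) {s s' : S}
    (hR : Rrel σ s s') : dep σ s' < dep σ s := by
  classical
  apply Finset.card_lt_card
  constructor
  · intro t ht
    simp only [Finset.mem_filter, Finset.mem_univ, true_and] at ht ⊢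
    exact Rrel_trans h hII hR ht
  · intro hsub
    have hs' : s' ∈ Finset.univ.filter (fun t => Rrel σ s t) := by
      simp only [Finset.mem_filter, Finset.mem_univ, true_and]; exact hR
    have := hsub hs'
    simp only [Finset.mem_filter, Finset.mem_univ, true_and] at this
    exact this.1 rfl

/-- the canonical target configuration -/
noncomputable def qpt (σ : Fin k → S) (h : Function.Surjective σ) (s : S) : ℝ × ℝ :=
  (-(dep σ s : ℝ), ((fstO σ h s : ℕ) : ℝ))

/-- membership in the convex core -/
def inY (σ : Fin k → S) (p : S → ℝ × ℝ) : Prop :=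
  (∀ s s', Rrel σ s s' → (p s).1 < (p s').1) ∧
  (∀ s s', s ≠ s' → AB σ s s' → (p s).2 < (p s').2)

lemma AB_fstO_lt {σ : Fin k → S} (h : Function.Surjective σ) {s s' : S}
    (hAB : AB σ s s') : fstO σ h s < fstO σ h s' :=
  hAB _ _ (fstO_spec h s) (fstO_spec h s')

lemma qpt_inY {σ : Fin k → S} (h : Function.Surjective σ) (hII : CondII σ) :
    inY σ (qpt σ h) := by
  constructor
  · intro s s' hR
    have := dep_lt h hII hR
    simp only [qpt]
    have : (dep σ s' : ℝ) < (dep σ s : ℝ) := by exact_mod_cast this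
    linarith
  · intro s s' _ hAB
    have := AB_fstO_lt h hAB
    simp only [qpt]
    exact_mod_cast Fin.lt_iff_val_lt_val.1 this

/-- the three conditions -/
def memX (σ : Fin k → S) (p : S → ℝ × ℝ) : Prop :=
  Function.Injective p ∧ CondC1 σ p ∧ CondC2 σ p

lemma inY_memX {σ : Fin k → S} (h : Function.Surjective σ) {p : S → ℝ × ℝ}
    (hY : inY σ p) : memX σ p := by
  obtain ⟨hY1, hY2⟩ := hY
  refine ⟨?_, ?_, ?_⟩
  · intro a b hab
    by_contra hne
    rcases trichotomy h hne with hc | hc | hc | hc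
    · exact absurd (congrArg Prod.fst hab) (ne_of_lt (hY1 a b hc))
    · exact absurd (congrArg Prod.fst hab).symm (ne_of_lt (hY1 b a hc))
    · exact absurd (congrArg Prod.snd hab) (ne_of_lt (hY2 a b hne hc))
    · exact absurd (congrArg Prod.snd hab).symm (ne_of_lt (hY2 b a (Ne.symm hne) hc))
  · intro s s' hne hex
    exact hY1 s s' ⟨hne, hex⟩
  · intro s s' hne _ hAB
    exact hY2 s s' hne hAB

lemma seg_lt {a a' b b' v : ℝ} (h1 : a < a') (h2 : b < b') (h3 : 0 ≤ v) (h4 : v ≤ 1) :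
    (1 - v) * a + v * b < (1 - v) * a' + v * b' := by
  rcases eq_or_lt_of_le h3 with rfl | hv
  · simpa using h1
  · nlinarith [mul_pos hv (sub_pos.2 h2), mul_nonneg (sub_nonneg.2 h4) (sub_nonneg.2 h1.le)]

lemma inY_comb {σ : Fin k → S} {p₁ p₂ : S → ℝ × ℝ} (h1 : inY σ p₁) (h2 : inY σ p₂)
    {v : ℝ} (hv0 : 0 ≤ v) (hv1 : v ≤ 1) :
    inY σ (fun s => ((1 - v) * (p₁ s).1 + v * (p₂ s).1,
                     (1 - v) * (p₁ s).2 + v * (p₂ s).2)) := by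
  constructor
  · intro s s' hR
    exact seg_lt (h1.1 s s' hR) (h2.1 s s' hR) hv0 hv1
  · intro s s' hne hAB
    exact seg_lt (h1.2 s s' hne hAB) (h2.2 s s' hne hAB) hv0 hv1

/-- the continuous scale factor -/
noncomputable def bigM (p : S → ℝ × ℝ) : ℝ :=
  1 + ∑ a : S, ∑ b : S, |(p a).2 - (p b).2|

lemma bigM_pos (p : S → ℝ × ℝ) : 0 < bigM p := by
  have : (0:ℝ) ≤ ∑ a : S, ∑ b : S, |(p a).2 - (p b).2| :=
    Finset.sum_nonneg fun _ _ => Finset.sum_nonneg fun _ _ => abs_nonneg _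
  simp only [bigM]; linarith

lemma lt_bigM (p : S → ℝ × ℝ) (s s' : S) : (p s).2 - (p s').2 < bigM p := by
  have h1 : |(p s).2 - (p s').2| ≤ ∑ b : S, |(p s).2 - (p b).2| :=
    Finset.single_le_sum (f := fun b => |(p s).2 - (p b).2|)
      (fun _ _ => abs_nonneg _) (Finset.mem_univ s')
  have h2 : (∑ b : S, |(p s).2 - (p b).2|) ≤ ∑ a : S, ∑ b : S, |(p a).2 - (p b).2| :=
    Finset.single_le_sum (f := fun a => ∑ b : S, |(p a).2 - (p b).2|)
      (fun _ _ => Finset.sum_nonneg fun _ _ => abs_nonneg _) (Finset.mem_univ s)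
  have h3 := le_abs_self ((p s).2 - (p s').2)
  simp only [bigM]; linarith

/-- phase-one map: shift the `y`-coordinates -/
noncomputable def ph1 (σ : Fin k → S) (h : Function.Surjective σ) (c : ℝ)
    (p : S → ℝ × ℝ) (s : S) : ℝ × ℝ :=
  ((p s).1, (p s).2 + c * ((fstO σ h s : ℕ) : ℝ))

lemma ph1_memX {σ : Fin k → S} (h : Function.Surjective σ) {p : S → ℝ × ℝ}
    (hp : memX σ p) {c : ℝ} (hc : 0 ≤ c) : memX σ (ph1 σ h c p) := by
  obtain ⟨hinj, hC1, hC2⟩ := hp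
  have key : ∀ s s' : S, s ≠ s' → AB σ s s' → (p s).1 = (p s').1 →
      (ph1 σ h c p s).2 < (ph1 σ h c p s').2 := by
    intro s s' hne hAB hx
    have hy := hC2 s s' hne hx hAB
    have hf : ((fstO σ h s : ℕ) : ℝ) ≤ ((fstO σ h s' : ℕ) : ℝ) := by
      exact_mod_cast le_of_lt (Fin.lt_iff_val_lt_val.1 (AB_fstO_lt h hAB))
    simp only [ph1]
    nlinarith
  refine ⟨?_, ?_, ?_⟩
  · intro a b hab
    by_contra hne
    have hx : (p a).1 = (p b).1 := by
      have := congrArg Prod.fst hab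
      simpa [ph1] using this
    have hy : (ph1 σ h c p a).2 = (ph1 σ h c p b).2 := congrArg Prod.snd hab
    rcases trichotomy h hne with hc' | hc' | hc' | hc'
    · exact absurd hx (ne_of_lt (hC1 a b hc'.1 hc'.2))
    · exact absurd hx.symm (ne_of_lt (hC1 b a hc'.1 hc'.2))
    · exact absurd hy (ne_of_lt (key a b hne hc' hx))
    · exact absurd hy.symm (ne_of_lt (key b a (Ne.symm hne) hc' hx.symm))
  · intro s s' hne hex
    exact hC1 s s' hne hex
  · intro s s' hne hx hAB
    exact key s s' hne hAB hx

lemma ph1_inY {σ : Fin k → S} (h : Function.Surjective σ) {p : S → ℝ × ℝ}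
    (hp : memX σ p) : inY σ (ph1 σ h (bigM p) p) := by
  obtain ⟨hinj, hC1, hC2⟩ := hp
  constructor
  · intro s s' hR
    exact hC1 s s' hR.1 hR.2
  · intro s s' hne hAB
    have hf : ((fstO σ h s : ℕ) : ℝ) + 1 ≤ ((fstO σ h s' : ℕ) : ℝ) := by
      have := Fin.lt_iff_val_lt_val.1 (AB_fstO_lt h hAB)
      exact_mod_cast this
    have hM := bigM_pos p
    have hb := lt_bigM p s s'
    simp only [ph1]
    nlinarith

end Geometry

section Homotopy

variable [Fintype S]

/-- the full contraction map -/
noncomputable def hmap (σ : Fin k → S) (h : Function.Surjective σ) (t : ℝ)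
    (p : S → ℝ × ℝ) (s : S) : ℝ × ℝ :=
  ((1 - max (2*t - 1) 0) * (p s).1 + max (2*t - 1) 0 * (qpt σ h s).1,
   (1 - max (2*t - 1) 0) * ((p s).2 + min (2*t) 1 * bigM p * ((fstO σ h s : ℕ) : ℝ))
     + max (2*t - 1) 0 * (qpt σ h s).2)

lemma comb_memX {σ : Fin k → S} (h : Function.Surjective σ) (hII : CondII σ)
    {p : S → ℝ × ℝ} (hp : memX σ p) {u v : ℝ} (hu : 0 ≤ u) (hv0 : 0 ≤ v) (hv1 : v ≤ 1)
    (hcase : v = 0 ∨ u = 1) :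
    memX σ (fun s => ((1 - v) * (p s).1 + v * (qpt σ h s).1,
      (1 - v) * ((p s).2 + u * bigM p * ((fstO σ h s : ℕ) : ℝ)) + v * (qpt σ h s).2)) := by
  rcases hcase with rfl | rfl
  · have heq : (fun s => ((1 - (0:ℝ)) * (p s).1 + 0 * (qpt σ h s).1,
        (1 - (0:ℝ)) * ((p s).2 + u * bigM p * ((fstO σ h s : ℕ) : ℝ)) + 0 * (qpt σ h s).2))
        = ph1 σ h (u * bigM p) p := by
      funext s
      simp only [ph1]
      exact Prod.ext (by ring) (by ring)
    rw [heq]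
    exact ph1_memX h hp (mul_nonneg hu (bigM_pos p).le)
  · have heq : (fun s => ((1 - v) * (p s).1 + v * (qpt σ h s).1,
        (1 - v) * ((p s).2 + 1 * bigM p * ((fstO σ h s : ℕ) : ℝ)) + v * (qpt σ h s).2))
        = fun s => ((1 - v) * ((ph1 σ h (bigM p) p) s).1 + v * (qpt σ h s).1,
            (1 - v) * ((ph1 σ h (bigM p) p) s).2 + v * (qpt σ h s).2) := by
      funext s
      simp only [ph1]
      exact Prod.ext (by ring) (by ring)
    rw [heq]
    exact inY_memX h (inY_comb (ph1_inY h hp) (qpt_inY h hII) hv0 hv1)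

lemma hmap_memX {σ : Fin k → S} (h : Function.Surjective σ) (hII : CondII σ)
    {p : S → ℝ × ℝ} (hp : memX σ p) {t : ℝ} (ht0 : 0 ≤ t) (ht1 : t ≤ 1) :
    memX σ (hmap σ h t p) := by
  have hu : (0:ℝ) ≤ min (2*t) 1 := le_min (by linarith) zero_le_one
  have hv0 : (0:ℝ) ≤ max (2*t - 1) 0 := le_max_right _ _
  have hv1 : max (2*t - 1) 0 ≤ 1 := max_le (by linarith) zero_le_one
  have hcase : max (2*t - 1) 0 = 0 ∨ min (2*t) 1 = 1 := by
    by_cases hhalf : t ≤ 1/2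
    · exact Or.inl (max_eq_right (by linarith))
    · exact Or.inr (min_eq_right (by linarith [not_le.1 hhalf]))
  exact comb_memX h hII hp hu hv0 hv1 hcase

lemma hmap_zero {σ : Fin k → S} (h : Function.Surjective σ) (p : S → ℝ × ℝ) :
    hmap σ h 0 p = p := by
  funext s
  simp only [hmap]
  norm_num

lemma hmap_one {σ : Fin k → S} (h : Function.Surjective σ) (p : S → ℝ × ℝ) :
    hmap σ h 1 p = qpt σ h := by
  funext s
  simp only [hmap]
  norm_num

end Homotopy

end StAux



/-- For a finite set `S`, `N ≥ 0` and `σ ∈ D(S, N)`, the subspace of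
`Conf(S)` of configurations satisfying (C1) and (C2) is contractible. -/
theorem statement0 {S : Type*} [Fintype S] (N k : ℕ)
    (hk : k = N + Fintype.card S) (σ : Fin k → S) (hσ : MemD σ) :
    ContractibleSpace {p : S → ℝ × ℝ // p ∈ Conf S ∧ CondC1 σ p ∧ CondC2 σ p} := by
  classical
  obtain ⟨hsurj, hI, hII⟩ := hσ
  rw [contractible_iff_id_nullhomotopic]
  have hqmem : StAux.qpt σ hsurj ∈ Conf S ∧ CondC1 σ (StAux.qpt σ hsurj) ∧
      CondC2 σ (StAux.qpt σ hsurj) := by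
    have h := StAux.inY_memX hsurj (StAux.qpt_inY hsurj hII)
    exact ⟨h.1, h.2.1, h.2.2⟩
  set X := {p : S → ℝ × ℝ // p ∈ Conf S ∧ CondC1 σ p ∧ CondC2 σ p} with hX
  have hmem : ∀ z : unitInterval × X,
      StAux.hmap σ hsurj (z.1 : ℝ) (z.2 : S → ℝ × ℝ) ∈
        {p : S → ℝ × ℝ | p ∈ Conf S ∧ CondC1 σ p ∧ CondC2 σ p} := by
    intro z
    have hp : StAux.memX σ (z.2 : S → ℝ × ℝ) := ⟨z.2.2.1, z.2.2.2.1, z.2.2.2.2⟩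
    have h := StAux.hmap_memX hsurj hII hp z.1.2.1 z.1.2.2
    exact ⟨h.1, h.2.1, h.2.2⟩
  refine ⟨⟨StAux.qpt σ hsurj, hqmem⟩, ?_⟩
  have hT : Continuous fun z : unitInterval × X => ((z.1 : ℝ)) :=
    continuous_subtype_val.comp continuous_fst
  have hP : Continuous fun z : unitInterval × X => (z.2 : S → ℝ × ℝ) :=
    continuous_subtype_val.comp continuous_snd
  have hPs1 : ∀ s : S, Continuous fun z : unitInterval × X => ((z.2 : S → ℝ × ℝ) s).1 :=
    fun s => ((continuous_apply s).comp hP).fst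
  have hPs2 : ∀ s : S, Continuous fun z : unitInterval × X => ((z.2 : S → ℝ × ℝ) s).2 :=
    fun s => ((continuous_apply s).comp hP).snd
  have hM : Continuous fun z : unitInterval × X => StAux.bigM (z.2 : S → ℝ × ℝ) := by
    simp only [StAux.bigM]
    refine Continuous.add continuous_const ?_
    refine continuous_finset_sum _ fun a _ => ?_
    refine continuous_finset_sum _ fun b _ => ?_
    exact ((hPs2 a).sub (hPs2 b)).abs
  have hv : Continuous fun z : unitInterval × X => max (2 * (z.1 : ℝ) - 1) 0 :=
    ((continuous_const.mul hT).sub continuous_const).max continuous_const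
  have hu : Continuous fun z : unitInterval × X => min (2 * (z.1 : ℝ)) 1 :=
    (continuous_const.mul hT).min continuous_const
  refine ⟨{ toFun := fun z => ⟨StAux.hmap σ hsurj (z.1 : ℝ) (z.2 : S → ℝ × ℝ), hmem z⟩
            continuous_toFun := ?_
            map_zero_left := ?_
            map_one_left := ?_ }⟩
  · refine Continuous.subtype_mk ?_ _
    refine continuous_pi fun s => ?_
    simp only [StAux.hmap]
    refine Continuous.prodMk ?_ ?_
    · exact (((continuous_const.sub hv).mul (hPs1 s)).add (hv.mul continuous_const))
    · exact (((continuous_const.sub hv).mul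
        ((hPs2 s).add ((hu.mul hM).mul continuous_const))).add (hv.mul continuous_const))
  · intro x
    apply Subtype.ext
    have h0 : ((0 : unitInterval) : ℝ) = 0 := rfl
    show StAux.hmap σ hsurj ((0 : unitInterval) : ℝ) (x : S → ℝ × ℝ) = (x : S → ℝ × ℝ)
    rw [h0, StAux.hmap_zero]
  · intro x
    apply Subtype.ext
    have h1 : ((1 : unitInterval) : ℝ) = 1 := rfl
    show StAux.hmap σ hsurj ((1 : unitInterval) : ℝ) (x : S → ℝ × ℝ) = StAux.qpt σ hsurj
    rw [h1, StAux.hmap_one]
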